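/- Let φ be a holomorphic self-map of the open right half-plane Π such that the closure of φ(Π) is a compact subset of Π. Then the composition operator C_φ on H^∞(Π), defined by (C_φ f)(z) = f(φ(z)), is a compact operator. -/

import Mathlib

open Complex BoundedContinuousFunction
open scoped ENNReal

/-- The open right half-plane `Π = {z : ℂ | 0 < Re z}`. -/
def RHP : Set ℂ := {z : ℂ | 0 < z.re}

/-- Extension of a bounded continuous function on `Π` to `ℂ` (by zero off `Π`). -/
noncomputable def extFun (f : ↥RHP →ᵇ ℂ) : ℂ → ℂ :=
  fun z => if h : 0 < z.re then f ⟨z, h⟩ else 0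

/-- `H^∞(Π)`: the space of bounded holomorphic functions on `Π`, realised as the
submodule of the Banach space of bounded continuous functions on `Π` (with the
supremum norm) consisting of the holomorphic ones. -/
noncomputable def Hinf : Submodule ℂ (↥RHP →ᵇ ℂ) where
  carrier := {f | DifferentiableOn ℂ (extFun f) RHP}
  add_mem' := by
    intro f g hf hg
    refine (DifferentiableOn.add hf hg).congr (fun z hz => ?_)
    have hz' : 0 < z.re := hz
    simp only [extFun]
    simp only [Pi.add_apply, extFun, dif_pos hz', BoundedContinuousFunction.coe_add]
    try rfl
  zero_mem' := by
    refine (differentiableOn_const 0).congr (fun z hz => ?_)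
    have hz' : 0 < z.re := hz
    simp only [extFun]
    rw [dif_pos hz']
    rfl
  smul_mem' := by
    intro c f hf
    refine (hf.const_smul c).congr (fun z hz => ?_)
    have hz' : 0 < z.re := hz
    simp only [extFun]
    simp only [Pi.smul_apply, extFun, dif_pos hz', BoundedContinuousFunction.coe_smul]
    try rfl

lemma mem_shift (z : ↥RHP) : (1 : ℂ) + z.1 ∈ RHP := by
  have hz := z.2
  simp only [RHP, Set.mem_setOf_eq, Complex.add_re, Complex.one_re] at *
  linarith

lemma mem_div (z : ↥RHP) : z.1 / (1 + z.1) ∈ RHP := by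
  have hz := z.2
  simp only [RHP, Set.mem_setOf_eq] at hz ⊢
  have hw : (1 + z.1) ≠ 0 := by
    intro h
    have h2 : (1 + z.1).re = 0 := by rw [h]; simp
    simp only [Complex.add_re, Complex.one_re] at h2
    linarith
  have hns : 0 < Complex.normSq (1 + z.1) := Complex.normSq_pos.mpr hw
  rw [Complex.div_re]
  have h1 : 0 < z.1.re * (1 + z.1).re := by
    simp only [Complex.add_re, Complex.one_re]
    nlinarith
  have h2 : 0 ≤ z.1.im * (1 + z.1).im := by
    simp only [Complex.add_im, Complex.one_im, zero_add]
    nlinarith [sq_nonneg z.1.im]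
  have := div_pos h1 hns
  have := div_nonneg h2 hns.le
  linarith

lemma isOpen_RHP : IsOpen RHP := isOpen_lt continuous_const Complex.continuous_re

lemma extFun_apply (f : ↥RHP →ᵇ ℂ) {z : ℂ} (hz : z ∈ RHP) : extFun f z = f ⟨z, hz⟩ := dif_pos hz

lemma mem_Hinf_iff {f : ↥RHP →ᵇ ℂ} : f ∈ Hinf ↔ DifferentiableOn ℂ (extFun f) RHP := Iff.rfl

/-- Cauchy estimate for the derivative. -/
lemma deriv_bound {g : ℂ → ℂ} (hg : DifferentiableOn ℂ g RHP)
    (hb : ∀ z ∈ RHP, ‖g z‖ ≤ 1) {c : ℂ} {δ : ℝ} (hδ : 0 < δ)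
    (h : Metric.closedBall c δ ⊆ RHP) : ‖deriv g c‖ ≤ 1 / δ := by
  have hd : DiffContOnCl ℂ g (Metric.ball c δ) :=
    ⟨hg.mono (Metric.ball_subset_closedBall.trans h),
     hg.continuousOn.mono (Metric.closure_ball_subset_closedBall.trans h)⟩
  exact Complex.norm_deriv_le_of_forall_mem_sphere_norm_le hδ hd
    (fun z hz => hb z (h (Metric.sphere_subset_closedBall hz)))

/-- Uniform Lipschitz estimate near a compact set well inside the half-plane. -/
lemma lip_bound {g : ℂ → ℂ} (hg : DifferentiableOn ℂ g RHP) (hb : ∀ z ∈ RHP, ‖g z‖ ≤ 1)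
    {K : Set ℂ} {δ : ℝ} (hδ : 0 < δ) (hsub : Metric.cthickening (2 * δ) K ⊆ RHP)
    {a b : ℂ} (ha : a ∈ K) (hab : dist b a ≤ δ) :
    ‖g b - g a‖ ≤ (1 / δ) * ‖b - a‖ := by
  have hseg : ∀ u ∈ segment ℝ a b, Metric.closedBall u δ ⊆ RHP := by
    intro u hu v hv
    apply hsub
    apply Metric.mem_cthickening_of_dist_le v a _ _ ha
    have h0 := dist_add_dist_of_mem_segment hu
    have h1 : dist u a ≤ dist b a := by
      rw [dist_comm u a, dist_comm b a]
      have := dist_nonneg (x := u) (y := b)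
      linarith
    calc dist v a ≤ dist v u + dist u a := dist_triangle _ _ _
      _ ≤ δ + δ := add_le_add (Metric.mem_closedBall.1 hv) (h1.trans hab)
      _ = 2 * δ := (two_mul δ).symm
  have hdiff : ∀ u ∈ segment ℝ a b, DifferentiableAt ℂ g u :=
    fun u hu => hg.differentiableAt (isOpen_RHP.mem_nhds (hseg u hu (Metric.mem_closedBall_self hδ.le)))
  have hbound : ∀ u ∈ segment ℝ a b, ‖deriv g u‖ ≤ 1 / δ :=
    fun u hu => deriv_bound hg hb hδ (hseg u hu)
  exact (convex_segment a b).norm_image_sub_le_of_norm_deriv_le hdiff hbound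
    (left_mem_segment ℝ a b) (right_mem_segment ℝ a b)

set_option synthInstance.maxHeartbeats 1000000 in
lemma isClosed_Hinf : IsClosed (Hinf : Set (↥RHP →ᵇ ℂ)) := by
  refine isClosed_of_closure_subset ?_
  intro f hf
  rcases mem_closure_iff_seq_limit.1 hf with ⟨u, hu, hlim⟩
  rw [SetLike.mem_coe, mem_Hinf_iff]
  have hloc : TendstoLocallyUniformlyOn (fun n => extFun (u n)) (extFun f) Filter.atTop RHP := by
    apply TendstoUniformlyOn.tendstoLocallyUniformlyOn
    rw [Metric.tendstoUniformlyOn_iff]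
    intro ε hε
    filter_upwards [Metric.tendsto_nhds.1 hlim ε hε] with n hn x hx
    have hx' : (0:ℝ) < x.re := hx
    calc dist (extFun f x) (extFun (u n) x) = dist (f ⟨x, hx'⟩) (u n ⟨x, hx'⟩) := by
          rw [extFun_apply f hx, extFun_apply (u n) hx]
      _ ≤ dist f (u n) := BoundedContinuousFunction.dist_coe_le_dist _
      _ = dist (u n) f := dist_comm _ _
      _ < ε := hn
  exact hloc.differentiableOn (Filter.Eventually.of_forall fun n => hu n) isOpen_RHP

/-- If `φ` is a holomorphic self-map of `Π` whose image has compact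
closure contained in `Π`, then the composition operator `C_φ f = f ∘ φ` on `H^∞(Π)` is a
compact operator. -/
theorem composition_operator_compact
    (φ : ℂ → ℂ) (hφmap : Set.MapsTo φ RHP RHP) (hφdiff : DifferentiableOn ℂ φ RHP)
    (hcl : closure (φ '' RHP) ⊆ RHP) (hcpt : IsCompact (closure (φ '' RHP)))
    (T : ↥Hinf →L[ℂ] ↥Hinf)
    (hT : ∀ f : ↥Hinf, ∀ z : ↥RHP, (T f).1 z = f.1 ⟨φ z.1, hφmap z.2⟩) :
    IsCompactOperator ⇑T := by
  haveI : CompleteSpace ↥Hinf := isClosed_Hinf.completeSpace_coe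
  set K : Set ℂ := closure (φ '' RHP) with hKdef
  obtain ⟨δ₀, hδ₀pos, hδ₀⟩ := hcpt.exists_cthickening_subset_open isOpen_RHP hcl
  set δ := δ₀ / 2 with hδdef
  have hδpos : 0 < δ := by positivity
  have hsub : Metric.cthickening (2 * δ) K ⊆ RHP := by
    have : 2 * δ = δ₀ := by rw [hδdef]; ring
    rw [this]; exact hδ₀
  have hKsub : K ⊆ RHP := hcl
  -- uniform bound on the closed unit ball
  have hball : ∀ f : ↥Hinf, f ∈ Metric.closedBall (0 : ↥Hinf) 1 →
      ∀ z ∈ RHP, ‖extFun f.1 z‖ ≤ 1 := by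
    intro f hf z hz
    rw [extFun_apply f.1 hz]
    calc ‖f.1 ⟨z, hz⟩‖ ≤ ‖f.1‖ := BoundedContinuousFunction.norm_coe_le_norm _ _
      _ = ‖f‖ := (Submodule.coe_norm f).symm
      _ ≤ 1 := by rwa [Metric.mem_closedBall, dist_zero_right] at hf
  have hTB : TotallyBounded (⇑T '' Metric.closedBall 0 1) := by
    rw [Metric.totallyBounded_iff]
    intro ε hε
    set r := min δ (ε * δ / 8) with hrdef
    have hrpos : 0 < r := lt_min hδpos (by positivity)
    obtain ⟨s, hsK, hsfin, hscov⟩ := hcpt.finite_cover_balls hrpos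
    haveI := hsfin.fintype
    set E : ↥Hinf → (↥s → ℂ) := fun f w => extFun f.1 w.1 with hEdef
    have hEim : E '' Metric.closedBall 0 1 ⊆ Metric.closedBall 0 1 := by
      rintro _ ⟨f, hf, rfl⟩
      rw [Metric.mem_closedBall, dist_zero_right]
      rw [pi_norm_le_iff_of_nonneg zero_le_one]
      intro w
      exact hball f hf w.1 (hKsub (hsK w.2))
    have hEtb : TotallyBounded (E '' Metric.closedBall 0 1) :=
      (isCompact_closedBall (0 : ↥s → ℂ) 1).totallyBounded.subset hEim
    rw [totallyBounded_iff_subset] at hEtb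
    obtain ⟨c, hcsub, hcfin, hccov⟩ :=
      hEtb _ (Metric.dist_mem_uniformity (show (0:ℝ) < ε / 4 by positivity))
    choose! F hF1 hF2 using fun y (hy : y ∈ c) => hcsub hy
    refine ⟨(fun y => T (F y)) '' c, hcfin.image _, ?_⟩
    rintro _ ⟨f, hf, rfl⟩
    obtain ⟨y, hyc, hy⟩ := Set.mem_iUnion₂.1 (hccov (Set.mem_image_of_mem E hf))
    have hy' : dist (E f) y < ε / 4 := hy
    refine Set.mem_iUnion₂.2 ⟨T (F y), Set.mem_image_of_mem _ hyc, ?_⟩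
    have hFy := hF1 y hyc
    -- pointwise estimate
    have key : ∀ x : ↥RHP, ‖(T f).1 x - (T (F y)).1 x‖ ≤ ε / 2 := by
      intro x
      set a := φ x.1 with hadef
      have haR : a ∈ RHP := hφmap x.2
      have haK : a ∈ K := subset_closure (Set.mem_image_of_mem φ x.2)
      obtain ⟨w, hws, hw⟩ := Set.mem_iUnion₂.1 (hscov haK)
      have hwK : w ∈ K := hsK hws
      have hdaw : dist a w < r := Metric.mem_ball.1 hw
      have hrδ : r ≤ δ := min_le_left _ _
      have hrε : r ≤ ε * δ / 8 := min_le_right _ _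
      have hgf : DifferentiableOn ℂ (extFun f.1) RHP := f.2
      have hgF : DifferentiableOn ℂ (extFun (F y).1) RHP := (F y).2
      have hbf := hball f hf
      have hbF := hball (F y) hFy
      have t1 : ‖extFun f.1 a - extFun f.1 w‖ ≤ ε / 8 := by
        have := lip_bound hgf hbf hδpos hsub hwK (le_of_lt (hdaw.trans_le hrδ))
        have h2 : (1 / δ) * ‖a - w‖ ≤ (1 / δ) * (ε * δ / 8) := by
          apply mul_le_mul_of_nonneg_left _ (by positivity)
          rw [← dist_eq_norm]
          exact (le_of_lt hdaw).trans hrε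
        have h3 : (1 / δ) * (ε * δ / 8) = ε / 8 := by field_simp
        linarith [this, h2, h3.le]
      have t3 : ‖extFun (F y).1 a - extFun (F y).1 w‖ ≤ ε / 8 := by
        have := lip_bound hgF hbF hδpos hsub hwK (le_of_lt (hdaw.trans_le hrδ))
        have h2 : (1 / δ) * ‖a - w‖ ≤ (1 / δ) * (ε * δ / 8) := by
          apply mul_le_mul_of_nonneg_left _ (by positivity)
          rw [← dist_eq_norm]
          exact (le_of_lt hdaw).trans hrε
        have h3 : (1 / δ) * (ε * δ / 8) = ε / 8 := by field_simp
        linarith [this, h2, h3.le]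
      have t2 : ‖extFun f.1 w - extFun (F y).1 w‖ ≤ ε / 4 := by
        have h1 : dist (E f ⟨w, hws⟩) (E (F y) ⟨w, hws⟩) ≤ dist (E f) (E (F y)) :=
          dist_le_pi_dist _ _ _
        have h2 : dist (E f) (E (F y)) < ε / 4 := by rw [hF2 y hyc]; exact hy'
        have h3 : E f ⟨w, hws⟩ = extFun f.1 w := rfl
        have h4 : E (F y) ⟨w, hws⟩ = extFun (F y).1 w := rfl
        rw [← dist_eq_norm, ← h3, ← h4]
        linarith
      have hTf : (T f).1 x = extFun f.1 a := by
        rw [hT f x, extFun_apply f.1 haR]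
      have hTF : (T (F y)).1 x = extFun (F y).1 a := by
        rw [hT (F y) x, extFun_apply (F y).1 haR]
      rw [hTf, hTF]
      calc ‖extFun f.1 a - extFun (F y).1 a‖
          ≤ ‖extFun f.1 a - extFun f.1 w‖ + ‖extFun f.1 w - extFun (F y).1 w‖ +
            ‖extFun (F y).1 w - extFun (F y).1 a‖ := by
            have := norm_sub_le_norm_sub_add_norm_sub (extFun f.1 a) (extFun f.1 w) (extFun (F y).1 a)
            have h5 : ‖extFun f.1 w - extFun (F y).1 a‖ ≤
                ‖extFun f.1 w - extFun (F y).1 w‖ + ‖extFun (F y).1 w - extFun (F y).1 a‖ :=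
              norm_sub_le_norm_sub_add_norm_sub _ _ _
            linarith
        _ ≤ ε / 8 + ε / 4 + ε / 8 := by
            have t3' : ‖extFun (F y).1 w - extFun (F y).1 a‖ ≤ ε / 8 := by
              rw [norm_sub_rev]; exact t3
            exact add_le_add (add_le_add t1 t2) t3'
        _ = ε / 2 := by ring
    rw [Metric.mem_ball, dist_eq_norm]
    have hnorm : ‖T f - T (F y)‖ = ‖((T f - T (F y) : ↥Hinf) : ↥RHP →ᵇ ℂ)‖ :=
      (Submodule.coe_norm _)
    rw [hnorm]
    have hle : ‖((T f - T (F y) : ↥Hinf) : ↥RHP →ᵇ ℂ)‖ ≤ ε / 2 := by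
      apply (BoundedContinuousFunction.norm_le (by positivity)).2
      intro x
      have hcoe : ((T f - T (F y) : ↥Hinf) : ↥RHP →ᵇ ℂ) x = (T f).1 x - (T (F y)).1 x := rfl
      rw [hcoe]
      exact key x
    linarith
  exact ⟨closure (⇑T '' Metric.closedBall 0 1),
    TotallyBounded.isCompact_of_isClosed hTB.closure isClosed_closure,
    Filter.mem_of_superset (Metric.closedBall_mem_nhds 0 one_pos)
      (fun f hf => subset_closure (Set.mem_image_of_mem _ hf))⟩
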